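/- arXiv:1203.0405 — 2 statements merged into one kernel-verified Lean document; each statement's English description precedes it below -/
import Mathlib

section
/- For a birth–death chain on ℤ started at 0 with a < 0 < b, the expected time to hit the set {a, b}, restricted to the event of hitting b first, is bounded above by Σ_{m=1}^{b} Σ_{k=0}^{m-1-a} r_{m-1} / (ω_{m-k-1}^+ · r_{m-k-1}), where r_m is the resistance of edge {m, m+1} and ω_m^+ the upward jump probability at m. -/
/-- For a birth–death chain on `ℤ` started at `0` with `a < 0 < b`, the expected time to
hit `{a, b}` restricted to the event of hitting `b` first (the function `g` solving the
associated Poisson equation, where `h` is the probability of hitting `b` before `a`) is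
bounded above by `∑_{m=1}^{b} ∑_{k=0}^{m-1-a} r_{m-1}/(ω_{m-k-1}^+ · r_{m-k-1})`. -/
theorem stmt12 (ωp ωm : ℤ → ℝ) (r : ℤ → ℝ)
    (hωp : ∀ m, 0 < ωp m) (hωm : ∀ m, 0 < ωm m) (hsum : ∀ m, ωm m + ωp m ≤ 1)
    (hr : ∀ m, 0 < r m) (hrev : ∀ m, ωm m * r (m - 1) = ωp m * r m)
    (a b : ℤ) (ha : a < 0) (hb : 0 < b)
    (h : ℤ → ℝ) (hha : h a = 0) (hhb : h b = 1)
    (hharm : ∀ m, a < m → m < b →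
      h m = ωm m * h (m - 1) + (1 - ωm m - ωp m) * h m + ωp m * h (m + 1))
    (g : ℤ → ℝ) (hga : g a = 0) (hgb : g b = 0)
    (hg : ∀ m, a < m → m < b →
      g m = h m + ωm m * g (m - 1) + (1 - ωm m - ωp m) * g m + ωp m * g (m + 1)) :
    g 0 ≤ ∑ m ∈ Finset.Icc (1 : ℤ) b, ∑ k ∈ Finset.Icc (0 : ℤ) (m - 1 - a),
      r (m - 1) / (ωp (m - k - 1) * r (m - k - 1)) := by
  have hrne : ∀ m, r m ≠ 0 := fun m => (hr m).ne'
  have hωpne : ∀ m, ωp m ≠ 0 := fun m => (hωp m).ne'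
  set d : ℤ → ℝ := fun m => g m - g (m + 1) with hd
  set δ : ℤ → ℝ := fun m => h (m + 1) - h m with hδ
  set S : ℤ → ℝ := fun m => ∑ j ∈ Finset.Icc (a + 1) m, h j / (ωp j * r j) with hS
  -- insert lemma for Icc on ℤ
  have hins : ∀ (c m : ℤ), c ≤ m + 1 →
      Finset.Icc c (m + 1) = insert (m + 1) (Finset.Icc c m) := by
    intro c m hcm; ext x
    simp only [Finset.mem_Icc, Finset.mem_insert]; omega
  have hnotmem : ∀ (c m : ℤ), (m + 1) ∉ Finset.Icc c m := by
    intro c m; simp only [Finset.mem_Icc]; omega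
  -- telescoping sums
  have tele : ∀ (f : ℤ → ℝ) (c : ℤ), ∀ n, c ≤ n →
      ∑ m ∈ Finset.Icc c (n - 1), (f (m + 1) - f m) = f n - f c := by
    intro f c
    refine Int.le_induction ?_ ?_
    · rw [Finset.Icc_eq_empty (by omega)]; simp
    · intro n hn ih
      have e : Finset.Icc c (n + 1 - 1) = insert n (Finset.Icc c (n - 1)) := by
        ext x; simp only [Finset.mem_Icc, Finset.mem_insert]; omega
      rw [e, Finset.sum_insert (by simp only [Finset.mem_Icc]; omega), ih]
      ring
  -- harmonicity ratio for h
  have hratio : ∀ m, a < m → m < b →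
      ωp m * (h (m + 1) - h m) = ωm m * (h m - h (m - 1)) := by
    intro m h1 h2
    linear_combination -hharm m h1 h2
  -- sign propagation for δ
  have hδneg : δ a < 0 → ∀ m, a ≤ m → m ≤ b - 1 → δ m < 0 := by
    intro h0
    refine Int.le_induction ?_ ?_
    · intro _; exact h0
    · intro m hm ih hmb
      have hδm : δ m < 0 := ih (by omega)
      have hr1 := hratio (m + 1) (by omega) (by omega)
      have key : ωp (m + 1) * δ (m + 1) = ωm (m + 1) * δ m := by
        simp only [hδ]
        have e : m + 1 - 1 = m := by ring
        rw [e] at hr1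
        linear_combination hr1
      nlinarith [key, hωp (m + 1), hωm (m + 1), mul_pos (hωm (m + 1)) (neg_pos.2 hδm)]
  have hδnonneg : 0 ≤ δ a → ∀ m, a ≤ m → m ≤ b - 1 → 0 ≤ δ m := by
    intro h0
    refine Int.le_induction ?_ ?_
    · intro _; exact h0
    · intro m hm ih hmb
      have hδm : 0 ≤ δ m := ih (by omega)
      have hr1 := hratio (m + 1) (by omega) (by omega)
      have key : ωp (m + 1) * δ (m + 1) = ωm (m + 1) * δ m := by
        simp only [hδ]
        have e : m + 1 - 1 = m := by ring
        rw [e] at hr1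
        linear_combination hr1
      nlinarith [key, hωp (m + 1), hωm (m + 1), mul_nonneg (hωm (m + 1)).le hδm]
  -- δ is nonnegative on [a, b-1]
  have hδnn : ∀ m, a ≤ m → m ≤ b - 1 → 0 ≤ δ m := by
    rcases le_or_gt 0 (δ a) with h0 | h0
    · exact hδnonneg h0
    · exfalso
      have hsum1 : ∑ m ∈ Finset.Icc a (b - 1), δ m = 1 := by
        have := tele h a b (by omega)
        simp only [hδ]
        rw [this, hhb, hha]; ring
      have hneg : ∑ m ∈ Finset.Icc a (b - 1), δ m < 0 := by
        apply Finset.sum_neg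
        · intro i hi
          rw [Finset.mem_Icc] at hi
          exact hδneg h0 i hi.1 hi.2
        · exact Finset.nonempty_Icc.2 (by omega)
      linarith
  -- h bounds on [a, b]
  have hh0 : ∀ m, a ≤ m → m ≤ b → 0 ≤ h m := by
    intro m h1 h2
    have := tele h a m h1
    have hnn : 0 ≤ ∑ j ∈ Finset.Icc a (m - 1), (h (j + 1) - h j) := by
      apply Finset.sum_nonneg
      intro j hj; rw [Finset.mem_Icc] at hj
      exact hδnn j hj.1 (by omega)
    rw [this, hha] at hnn; linarith
  have hh1 : ∀ m, a ≤ m → m ≤ b → h m ≤ 1 := by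
    intro m h1 h2
    have := tele h m b h2
    have hnn : 0 ≤ ∑ j ∈ Finset.Icc m (b - 1), (h (j + 1) - h j) := by
      apply Finset.sum_nonneg
      intro j hj; rw [Finset.mem_Icc] at hj
      exact hδnn j (by omega) hj.2
    rw [this, hhb] at hnn; linarith
  -- key identity for d
  have hdkey : ∀ m, a < m → m < b →
      ωp m * d m = h m + ωm m * (g (m - 1) - g m) := by
    intro m h1 h2
    simp only [hd]
    linear_combination hg m h1 h2
  -- v identity: d m = r m * (d a / r a + S m) on [a, b-1]
  have hv : ∀ m, a ≤ m → m ≤ b - 1 → d m = r m * (d a / r a + S m) := by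
    refine Int.le_induction ?_ ?_
    · intro _
      have hSa : S a = 0 := by
        simp only [hS]
        rw [Finset.Icc_eq_empty (by omega)]; simp
      rw [hSa, add_zero, mul_comm, div_mul_cancel₀ _ (hrne a)]
    · intro m hm ih hmb
      have ihm : d m = r m * (d a / r a + S m) := ih (by omega)
      have hk := hdkey (m + 1) (by omega) (by omega)
      have e1 : m + 1 - 1 = m := by ring
      rw [e1] at hk
      have hk2 : ωp (m + 1) * d (m + 1) = h (m + 1) + ωm (m + 1) * d m := by
        simp only [hd] at hk ⊢
        linear_combination hk
      have hrv := hrev (m + 1)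
      rw [e1] at hrv
      have hSstep : S (m + 1) = S m + h (m + 1) / (ωp (m + 1) * r (m + 1)) := by
        simp only [hS]
        rw [hins (a + 1) m (by omega), Finset.sum_insert (hnotmem (a + 1) m)]
        ring
      rw [hSstep]
      have h3 : ωp (m + 1) * d (m + 1)
          = h (m + 1) + ωp (m + 1) * r (m + 1) * (d a / r a + S m) := by
        rw [hk2, ihm]
        linear_combination (d a / r a + S m) * hrv
      have hne1 := hωpne (m + 1)
      have hne2 := hrne (m + 1)
      apply mul_left_cancel₀ hne1
      have e : ωp (m + 1) * r (m + 1) * (h (m + 1) / (ωp (m + 1) * r (m + 1))) = h (m + 1) := by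
        field_simp
      linear_combination h3 - e
  -- telescoping for g
  have hgtel : ∀ (c : ℤ), ∀ n, c ≤ n → ∑ m ∈ Finset.Icc c (n - 1), d m = g c - g n := by
    intro c
    refine Int.le_induction ?_ ?_
    · rw [Finset.Icc_eq_empty (by omega)]; simp
    · intro n hn ih
      have e : Finset.Icc c (n + 1 - 1) = insert n (Finset.Icc c (n - 1)) := by
        ext x; simp only [Finset.mem_Icc, Finset.mem_insert]; omega
      rw [e, Finset.sum_insert (by simp only [Finset.mem_Icc]; omega), ih]
      simp only [hd]; ring
  -- S is nonnegative
  have hSnn : ∀ m, m ≤ b - 1 → 0 ≤ S m := by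
    intro m hm
    apply Finset.sum_nonneg
    intro j hj; rw [Finset.mem_Icc] at hj
    exact div_nonneg (hh0 j (by omega) (by omega)) (mul_pos (hωp j) (hr j)).le
  -- the sum over the full interval vanishes
  have hzero : ∑ m ∈ Finset.Icc a (b - 1), r m * (d a / r a + S m) = 0 := by
    have ht := hgtel a b (by omega)
    rw [hga, hgb] at ht
    calc ∑ m ∈ Finset.Icc a (b - 1), r m * (d a / r a + S m)
        = ∑ m ∈ Finset.Icc a (b - 1), d m := by
          apply Finset.sum_congr rfl
          intro i hi; rw [Finset.mem_Icc] at hi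
          exact (hv i hi.1 hi.2).symm
      _ = 0 := by rw [ht]; ring
  -- the constant is nonpositive
  have hC : d a / r a ≤ 0 := by
    by_contra hC'
    push_neg at hC'
    have hpos : 0 < ∑ m ∈ Finset.Icc a (b - 1), r m * (d a / r a + S m) := by
      apply Finset.sum_pos
      · intro i hi; rw [Finset.mem_Icc] at hi
        have := hSnn i hi.2
        have := hr i
        nlinarith
      · exact Finset.nonempty_Icc.2 (by omega)
    linarith
  -- expression for g 0
  have hg0 : g 0 = ∑ m ∈ Finset.Icc 0 (b - 1), d m := by
    have := hgtel 0 b (by omega)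
    rw [hgb] at this; linarith
  -- main chain of inequalities
  have step1 : g 0 ≤ ∑ m ∈ Finset.Icc 0 (b - 1), r m * S m := by
    rw [hg0]
    apply Finset.sum_le_sum
    intro i hi; rw [Finset.mem_Icc] at hi
    rw [hv i (by omega) hi.2]
    have := hSnn i hi.2
    nlinarith [hr i]
  have step2 : ∑ m ∈ Finset.Icc 0 (b - 1), r m * S m
      ≤ ∑ m ∈ Finset.Icc 0 (b - 1), ∑ j ∈ Finset.Icc (a + 1) m,
          r m / (ωp j * r j) := by
    apply Finset.sum_le_sum
    intro i hi; rw [Finset.mem_Icc] at hi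
    simp only [hS]
    rw [Finset.mul_sum]
    apply Finset.sum_le_sum
    intro j hj; rw [Finset.mem_Icc] at hj
    have hD : 0 < ωp j * r j := mul_pos (hωp j) (hr j)
    rw [mul_div_assoc']
    refine div_le_div_of_nonneg_right ?_ hD.le
    have h1 := hh1 j (by omega) (by omega)
    nlinarith [hr i]
  have step3 : ∑ m ∈ Finset.Icc (0:ℤ) (b - 1), ∑ j ∈ Finset.Icc (a + 1) m,
          r m / (ωp j * r j)
      ≤ ∑ m ∈ Finset.Icc (0:ℤ) (b - 1), ∑ j ∈ Finset.Icc a m,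
          r m / (ωp j * r j) := by
    apply Finset.sum_le_sum
    intro i hi
    apply Finset.sum_le_sum_of_subset_of_nonneg
    · exact Finset.Icc_subset_Icc_left (by omega)
    · intro j _ _
      exact div_nonneg (hr i).le (mul_pos (hωp j) (hr j)).le
  -- reindexing: the target equals the last sum
  have Teq : ∑ m ∈ Finset.Icc (0:ℤ) (b - 1), ∑ j ∈ Finset.Icc a m,
          r m / (ωp j * r j)
      = ∑ m ∈ Finset.Icc (1 : ℤ) b, ∑ k ∈ Finset.Icc (0 : ℤ) (m - 1 - a),
          r (m - 1) / (ωp (m - k - 1) * r (m - k - 1)) := by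
    refine Finset.sum_nbij' (fun m => m + 1) (fun m => m - 1) ?_ ?_ ?_ ?_ ?_
    · intro x hx; simp only [Finset.mem_Icc] at hx ⊢; omega
    · intro x hx; simp only [Finset.mem_Icc] at hx ⊢; omega
    · intro x _; ring
    · intro x _; ring
    · intro m hm
      refine Finset.sum_nbij' (fun j => m - j) (fun k => m - k) ?_ ?_ ?_ ?_ ?_
      · intro x hx; simp only [Finset.mem_Icc] at hx ⊢; omega
      · intro x hx; simp only [Finset.mem_Icc] at hx ⊢; omega
      · intro x _; ring
      · intro x _; ring
      · intro j hj
        have e1 : m + 1 - 1 = m := by ring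
        have e2 : m + 1 - (m - j) - 1 = j := by ring
        rw [e1, e2]
  calc g 0 ≤ ∑ m ∈ Finset.Icc 0 (b - 1), r m * S m := step1
    _ ≤ ∑ m ∈ Finset.Icc (0:ℤ) (b - 1), ∑ j ∈ Finset.Icc (a + 1) m,
          r m / (ωp j * r j) := step2
    _ ≤ ∑ m ∈ Finset.Icc (0:ℤ) (b - 1), ∑ j ∈ Finset.Icc a m,
          r m / (ωp j * r j) := step3
    _ = _ := Teq
end

section
/- For the random walk on a finite weighted graph started at a vertex x, the expected time to hit a set B of vertices is at most R_eff(x, B) · μ(V), where R_eff(x,B) is the effective resistance between x and B and μ(V) = Σ_{y∈V} μ({y}) is the total invariant measure (sum of vertex conductances). -/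
/-- The Dirichlet energy of a potential `f` in a finite network with conductances `c`. -/
noncomputable def energyFn {V : Type*} [Fintype V] (c : V → V → ℝ) (f : V → ℝ) : ℝ :=
  (1 / 2) * ∑ u, ∑ v, c u v * (f u - f v) ^ 2

/-- The effective conductance between `x` and a set `B`, via the Dirichlet variational
principle (potentials equal to `1` at `x` and `0` on `B`). -/
noncomputable def effCondSet {V : Type*} [Fintype V] (c : V → V → ℝ) (x : V)
    (B : Finset V) : ℝ :=
  sInf {E : ℝ | ∃ f : V → ℝ, f x = 1 ∧ (∀ b ∈ B, f b = 0) ∧ E = energyFn c f}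

/-- The effective resistance between `x` and a set `B`. -/
noncomputable def effResSet {V : Type*} [Fintype V] (c : V → V → ℝ) (x : V)
    (B : Finset V) : ℝ :=
  (effCondSet c x B)⁻¹

/-- Clipping at a level is a "subcontraction" for quadratic forms. -/
lemma aux_min_sq (s t a : ℝ) : (min s a - min t a) ^ 2 ≤ (min s a - min t a) * (s - t) := by
  rcases le_total s a with hs | hs <;> rcases le_total t a with ht | ht <;>
    simp [min_eq_left, min_eq_right, hs, ht] <;> nlinarith

/-- For the random walk on a finite connected weighted graph started at `x`, the expected
time `u(x)` to hit a nonempty set `B` of vertices (the solution of the associated system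
`u ≡ 0` on `B`, `u(y) = 1 + ∑_z P(y,z) u(z)` off `B`) is at most
`R_eff(x, B) · μ(V)`, where `μ(V)` is the total vertex conductance. -/
theorem stmt13 {V : Type*} [Fintype V] (Adj : V → V → Prop) (hsym : Symmetric Adj)
    (c : V → V → ℝ) (hcsym : ∀ u v, c u v = c v u)
    (hpos : ∀ u v, Adj u v → 0 < c u v) (hzero : ∀ u v, ¬ Adj u v → c u v = 0)
    (hconn : ∀ p q : V, ∃ (k : ℕ) (w : ℕ → V), w 0 = p ∧ w k = q ∧
      ∀ i < k, Adj (w i) (w (i + 1)))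
    (μ : V → ℝ) (hμ : ∀ y, μ y = ∑ z, c y z)
    (P : V → V → ℝ) (hP : ∀ y z, P y z = c y z / μ y)
    (B : Finset V) (hB : B.Nonempty) (x : V)
    (u : V → ℝ) (hub : ∀ y ∈ B, u y = 0)
    (hu : ∀ y, y ∉ B → u y = 1 + ∑ z, P y z * u z) :
    u x ≤ effResSet c x B * ∑ y, μ y := by
  classical
  have hc0 : ∀ p q, 0 ≤ c p q := by
    intro p q
    by_cases h : Adj p q
    · exact (hpos p q h).le
    · exact (hzero p q h).ge
  have hμ0 : ∀ y, 0 ≤ μ y := by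
    intro y
    rw [hμ y]
    exact Finset.sum_nonneg fun z _ => hc0 y z
  -- μ is positive off B
  have hμpos : ∀ y, y ∉ B → 0 < μ y := by
    intro y hy
    obtain ⟨b, hb⟩ := hB
    obtain ⟨k, w, hw0, hwk, hadj⟩ := hconn y b
    have hk : 0 < k := by
      rcases Nat.eq_zero_or_pos k with h | h
      · exfalso; apply hy; subst h; rw [← hw0, hwk]; exact hb
      · exact h
    have h1 : 0 < c y (w 1) := by
      have := hpos _ _ (hadj 0 hk)
      rwa [hw0] at this
    have h2 : c y (w 1) ≤ ∑ z, c y z :=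
      Finset.single_le_sum (f := fun z => c y z) (fun z _ => hc0 y z) (Finset.mem_univ (w 1))
    rw [hμ y]; linarith
  have hP0 : ∀ y z, 0 ≤ P y z := by
    intro y z; rw [hP]; exact div_nonneg (hc0 y z) (hμ0 y)
  -- u is nonnegative (minimum principle)
  have hu0 : ∀ y, 0 ≤ u y := by
    obtain ⟨y0, -, hy0⟩ := Finset.exists_min_image Finset.univ u ⟨x, Finset.mem_univ x⟩
    by_cases hyB : y0 ∈ B
    · intro y
      have := hy0 y (Finset.mem_univ y)
      rw [hub y0 hyB] at this
      exact this
    · exfalso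
      have hμy := hμpos y0 hyB
      have hPsum : ∑ z, P y0 z = 1 := by
        simp_rw [hP]
        rw [← Finset.sum_div, ← hμ y0, div_self hμy.ne']
      have hsum : u y0 * 1 ≤ ∑ z, P y0 z * u z := by
        rw [← hPsum, Finset.mul_sum]
        exact Finset.sum_le_sum fun z _ => by
          rw [mul_comm (u y0)]
          exact mul_le_mul_of_nonneg_left (hy0 z (Finset.mem_univ z)) (hP0 y0 z)
      have := hu y0 hyB
      linarith
  -- basic facts about the variational set
  set S := {E : ℝ | ∃ f : V → ℝ, f x = 1 ∧ (∀ b ∈ B, f b = 0) ∧ E = energyFn c f} with hSdef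
  have hEnonneg : ∀ f : V → ℝ, 0 ≤ energyFn c f := by
    intro f
    apply mul_nonneg (by norm_num)
    exact Finset.sum_nonneg fun y _ => Finset.sum_nonneg fun z _ =>
      mul_nonneg (hc0 y z) (sq_nonneg _)
  have hSlb : ∀ E ∈ S, (0:ℝ) ≤ E := by
    rintro E ⟨f, -, -, rfl⟩; exact hEnonneg f
  have hbdd : BddBelow S := ⟨0, hSlb⟩
  have hCond : effCondSet c x B = sInf S := rfl
  by_cases hxB : x ∈ B
  · rw [hub x hxB]
    have h1 : 0 ≤ effCondSet c x B := Real.sInf_nonneg hSlb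
    exact mul_nonneg (inv_nonneg.mpr h1) (Finset.sum_nonneg fun y _ => hμ0 y)
  -- main case : x ∉ B
  set a := u x with ha
  have ha1 : 1 ≤ a := by
    have := hu x hxB
    have hs : 0 ≤ ∑ z, P x z * u z :=
      Finset.sum_nonneg fun z _ => mul_nonneg (hP0 x z) (hu0 z)
    rw [ha, this]; linarith
  have hapos : 0 < a := lt_of_lt_of_le one_pos ha1
  set v : V → ℝ := fun y => min (u y) a with hv
  -- the test potential
  set f : V → ℝ := fun y => v y / a with hf
  have hfx : f x = 1 := by
    simp only [hf, hv, min_self]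
    rw [← ha, min_self]; exact div_self hapos.ne'
  have hfB : ∀ b ∈ B, f b = 0 := by
    intro b hb
    simp only [hf, hv, hub b hb]
    rw [min_eq_left hapos.le, zero_div]
  have hfS : energyFn c f ∈ S := ⟨f, hfx, hfB, rfl⟩
  -- summation by parts : energy of v bounded by a * total measure
  have hg : ∀ y, y ∉ B → μ y * u y - ∑ z, c y z * u z = μ y := by
    intro y hy
    have hμy := (hμpos y hy).ne'
    have := hu y hy
    simp_rw [hP, div_mul_eq_mul_div, ← Finset.sum_div] at this
    field_simp at this
    linarith
  have hswap1 : ∑ y, ∑ z, c y z * (v z * u z) = ∑ y, ∑ z, c y z * (v y * u y) := by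
    rw [Finset.sum_comm]
    exact Finset.sum_congr rfl fun p _ => Finset.sum_congr rfl fun q _ => by rw [hcsym]
  have hswap2 : ∑ y, ∑ z, c y z * (v z * u y) = ∑ y, ∑ z, c y z * (v y * u z) := by
    rw [Finset.sum_comm]
    exact Finset.sum_congr rfl fun p _ => Finset.sum_congr rfl fun q _ => by rw [hcsym]
  have hid : ∑ y, ∑ z, c y z * ((v y - v z) * (u y - u z))
      = 2 * ∑ y, v y * (μ y * u y - ∑ z, c y z * u z) := by
    have expand : ∀ y z : V, c y z * ((v y - v z) * (u y - u z))
        = (c y z * (v y * u y) + c y z * (v z * u z))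
          - (c y z * (v y * u z) + c y z * (v z * u y)) := by
      intro y z; ring
    simp_rw [expand, Finset.sum_sub_distrib, Finset.sum_add_distrib]
    rw [hswap1, hswap2]
    have h1 : ∀ y : V, ∑ z, c y z * (v y * u y) = v y * (μ y * u y) := by
      intro y
      rw [← Finset.sum_mul, ← hμ y]; ring
    have h2 : ∀ y : V, ∑ z, c y z * (v y * u z) = v y * ∑ z, c y z * u z := by
      intro y
      rw [Finset.mul_sum]
      exact Finset.sum_congr rfl fun z _ => by ring
    simp_rw [h1, h2]
    rw [Finset.mul_sum]
    rw [← Finset.sum_add_distrib, ← Finset.sum_add_distrib, ← Finset.sum_sub_distrib]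
    exact Finset.sum_congr rfl fun y _ => by ring
  have hEv : energyFn c v ≤ a * ∑ y, μ y := by
    have step1 : energyFn c v ≤ (1/2) * ∑ y, ∑ z, c y z * ((v y - v z) * (u y - u z)) := by
      unfold energyFn
      apply mul_le_mul_of_nonneg_left _ (by norm_num : (0:ℝ) ≤ 1/2)
      apply Finset.sum_le_sum
      intro y _
      apply Finset.sum_le_sum
      intro z _
      exact mul_le_mul_of_nonneg_left (aux_min_sq (u y) (u z) a) (hc0 y z)
    have step2 : (1/2) * ∑ y, ∑ z, c y z * ((v y - v z) * (u y - u z))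
        = ∑ y, v y * (μ y * u y - ∑ z, c y z * u z) := by
      rw [hid]; ring
    have step3 : ∑ y, v y * (μ y * u y - ∑ z, c y z * u z) ≤ ∑ y, a * μ y := by
      apply Finset.sum_le_sum
      intro y _
      by_cases hy : y ∈ B
      · have : v y = 0 := by
          simp only [hv, hub y hy]
          exact min_eq_left hapos.le
        rw [this, zero_mul]
        exact mul_nonneg hapos.le (hμ0 y)
      · rw [hg y hy]
        exact mul_le_mul_of_nonneg_right (min_le_right _ _) (hμ0 y)
    rw [← Finset.mul_sum] at step3
    linarith
  -- energy of the test potential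
  have hEf : energyFn c f = energyFn c v / a ^ 2 := by
    unfold energyFn
    have ha' : a ≠ 0 := hapos.ne'
    have hterm : ∀ y z : V, c y z * (f y - f z) ^ 2 = c y z * (v y - v z) ^ 2 / a ^ 2 := by
      intro y z
      simp only [hf]
      field_simp
    simp_rw [hterm, ← Finset.sum_div]
    ring
  have hEfle : energyFn c f ≤ (∑ y, μ y) / a := by
    rw [hEf, div_le_div_iff₀ (by positivity) hapos]
    nlinarith [hEv, hapos]
  -- lower bound on the effective conductance via a path from x to B
  obtain ⟨b, hb⟩ := hB
  obtain ⟨k, w, hw0, hwk, hadj⟩ := hconn x b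
  have hk : 0 < k := by
    rcases Nat.eq_zero_or_pos k with h | h
    · exfalso; apply hxB; subst h; rw [← hw0, hwk]; exact hb
    · exact h
  have hkR : (0:ℝ) < k := Nat.cast_pos.mpr hk
  have hrange : (Finset.range k).Nonempty := ⟨0, Finset.mem_range.mpr hk⟩
  set cmin := (Finset.range k).inf' hrange (fun i => c (w i) (w (i+1))) with hcmin
  have hcminpos : 0 < cmin := by
    rw [hcmin, Finset.lt_inf'_iff]
    intro i hi
    exact hpos _ _ (hadj i (Finset.mem_range.mp hi))
  set δ := cmin / (k:ℝ)^2 with hδdef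
  have hδpos : 0 < δ := div_pos hcminpos (by positivity)
  have hlow : ∀ E ∈ S, δ ≤ E := by
    rintro E ⟨g, hgx, hgB, rfl⟩
    have htel : ∑ i ∈ Finset.range k, (g (w i) - g (w (i+1))) = 1 := by
      rw [Finset.sum_range_sub' (fun i => g (w i))]
      rw [hw0, hwk, hgx, hgB b hb]; ring
    have hex : ∃ i ∈ Finset.range k, 1/(k:ℝ) ≤ |g (w i) - g (w (i+1))| := by
      by_contra h
      push_neg at h
      have h1 : (1:ℝ) ≤ ∑ i ∈ Finset.range k, |g (w i) - g (w (i+1))| := by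
        calc (1:ℝ) = ∑ i ∈ Finset.range k, (g (w i) - g (w (i+1))) := htel.symm
          _ ≤ ∑ i ∈ Finset.range k, |g (w i) - g (w (i+1))| :=
              Finset.sum_le_sum fun i _ => le_abs_self _
      have h2 : ∑ i ∈ Finset.range k, |g (w i) - g (w (i+1))|
          < ∑ _i ∈ Finset.range k, 1/(k:ℝ) :=
        Finset.sum_lt_sum_of_nonempty hrange h
      rw [Finset.sum_const, Finset.card_range, nsmul_eq_mul, mul_one_div,
        div_self hkR.ne'] at h2
      linarith
    obtain ⟨i, hik, hΔ⟩ := hex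
    set Δ := g (w i) - g (w (i+1)) with hΔdef
    have hΔsq : 1/(k:ℝ)^2 ≤ Δ^2 := by
      have := pow_le_pow_left₀ (by positivity : (0:ℝ) ≤ 1/(k:ℝ)) hΔ 2
      rwa [sq_abs, div_pow, one_pow] at this
    have hne : w i ≠ w (i+1) := by
      intro h
      rw [hΔdef, h, sub_self, abs_zero] at hΔ
      have := one_div_pos.mpr hkR
      linarith
    set T : V → V → ℝ := fun p q => c p q * (g p - g q)^2 with hT
    have hT0 : ∀ p q, 0 ≤ T p q := fun p q => mul_nonneg (hc0 p q) (sq_nonneg _)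
    have hrow : ∀ p, 0 ≤ ∑ q, T p q := fun p => Finset.sum_nonneg fun q _ => hT0 p q
    have hpair : T (w i) (w (i+1)) + T (w (i+1)) (w i) ≤ ∑ p, ∑ q, T p q := by
      have hsub : ∑ p ∈ {w i, w (i+1)}, (∑ q, T p q) ≤ ∑ p, ∑ q, T p q :=
        Finset.sum_le_sum_of_subset_of_nonneg (Finset.subset_univ _)
          (fun p _ _ => hrow p)
      rw [Finset.sum_pair hne] at hsub
      have e1 : T (w i) (w (i+1)) ≤ ∑ q, T (w i) q :=
        Finset.single_le_sum (fun q _ => hT0 _ q) (Finset.mem_univ _)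
      have e2 : T (w (i+1)) (w i) ≤ ∑ q, T (w (i+1)) q :=
        Finset.single_le_sum (fun q _ => hT0 _ q) (Finset.mem_univ _)
      linarith
    have hTval : T (w i) (w (i+1)) + T (w (i+1)) (w i)
        = 2 * (c (w i) (w (i+1)) * Δ^2) := by
      simp only [hT, hΔdef]
      rw [hcsym (w (i+1)) (w i)]
      ring
    have hci : cmin ≤ c (w i) (w (i+1)) := by
      rw [hcmin]
      exact Finset.inf'_le _ hik
    have hδle : δ ≤ c (w i) (w (i+1)) * Δ^2 := by
      rw [hδdef, div_eq_mul_one_div]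
      exact mul_le_mul hci hΔsq (by positivity) (hc0 _ _)
    unfold energyFn
    nlinarith [hpair, hTval, hδle]
  have hSne : S.Nonempty := ⟨_, hfS⟩
  have hinfge : δ ≤ sInf S := le_csInf hSne hlow
  have hinfpos : 0 < sInf S := lt_of_lt_of_le hδpos hinfge
  have hinfle : sInf S ≤ energyFn c f := csInf_le hbdd hfS
  have hfinal : sInf S ≤ (∑ y, μ y) / a := le_trans hinfle hEfle
  have hmain : a * sInf S ≤ ∑ y, μ y := by
    have h1 := mul_le_mul_of_nonneg_left hfinal hapos.le
    have h2 : a * ((∑ y, μ y) / a) = ∑ y, μ y := by field_simp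
    linarith
  unfold effResSet
  rw [hCond]
  calc a = a * sInf S * (sInf S)⁻¹ := by field_simp
    _ ≤ (∑ y, μ y) * (sInf S)⁻¹ :=
        mul_le_mul_of_nonneg_right hmain (inv_nonneg.mpr hinfpos.le)
    _ = (sInf S)⁻¹ * ∑ y, μ y := mul_comm _ _
end
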